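/- Let X be a Banach space over 𝕂 ∈ {ℝ,ℂ}, let G ⊆ L(X) be a compact group of isometries (compact in the operator-norm topology), and let Y be a closed G-invariant subspace of X (g(Y) = Y for all g ∈ G). Let X_G = {x ∈ X : g(x) = x for all g ∈ G} and Y_G = Y ∩ X_G. If the quotient X/Y is strictly convex and every continuous linear functional on X_G that vanishes on Y_G attains its norm, then Y_G is proximinal in X_G, i.e. for every x ∈ X_G there exists y ∈ Y_G with ‖x − y‖ = dist(x, Y_G). -/

import Mathlib

noncomputable section

/-- The subspace `X_G` of `G`-invariant points of `X`. -/
def fixedSubmodule {𝕜 : Type*} [RCLike 𝕜] {X : Type*} [NormedAddCommGroup X] [NormedSpace 𝕜 X]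
    (G : Set (X →L[𝕜] X)) : Submodule 𝕜 X where
  carrier := {x | ∀ g ∈ G, g x = x}
  add_mem' := by
    intro a b ha hb g hg
    simp only [map_add, ha g hg, hb g hg]
  zero_mem' := by
    intro g hg
    simp
  smul_mem' := by
    intro c a ha g hg
    simp only [map_smul, ha g hg]


section Aux

open MeasureTheory Metric

variable {𝕜 : Type*} [RCLike 𝕜] {X : Type*} [NormedAddCommGroup X] [NormedSpace 𝕜 X] [CompleteSpace X]

private lemma exists_fixed_close_aux (G : Set (X →L[𝕜] X))
    (hG_iso : ∀ g ∈ G, ∀ x : X, ‖g x‖ = ‖x‖)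
    (hG_id : ContinuousLinearMap.id 𝕜 X ∈ G)
    (hG_comp : ∀ g ∈ G, ∀ h ∈ G, g.comp h ∈ G)
    (hG_inv : ∀ g ∈ G, ∃ h ∈ G, g.comp h = ContinuousLinearMap.id 𝕜 X ∧
      h.comp g = ContinuousLinearMap.id 𝕜 X)
    (hG_cpt : IsCompact G)
    (Y : Submodule 𝕜 X) (hY_closed : IsClosed (Y : Set X))
    (hY_inv : ∀ g ∈ G, (g : X →L[𝕜] X) '' (Y : Set X) = (Y : Set X))
    (x : X) (hx : ∀ g ∈ G, g x = x) (y : X) (hy : y ∈ Y) :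
    ∃ y' ∈ Y, (∀ g ∈ G, g y' = y') ∧ ‖x - y'‖ ≤ ‖x - y‖ := by
  letI : NormedSpace ℝ X := NormedSpace.restrictScalars ℝ 𝕜 X
  haveI : CompactSpace ↥G := isCompact_iff_compactSpace.mp hG_cpt
  letI : Group ↥G :=
    { mul := fun a b => ⟨a.1.comp b.1, hG_comp _ a.2 _ b.2⟩
      one := ⟨ContinuousLinearMap.id 𝕜 X, hG_id⟩
      inv := fun a => ⟨(hG_inv a.1 a.2).choose, (hG_inv a.1 a.2).choose_spec.1⟩
      mul_assoc := fun a b c => Subtype.ext (ContinuousLinearMap.comp_assoc _ _ _).symm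
      one_mul := fun a => Subtype.ext (a.1.id_comp)
      mul_one := fun a => Subtype.ext (a.1.comp_id)
      inv_mul_cancel := fun a => Subtype.ext (hG_inv a.1 a.2).choose_spec.2.2 }
  have hmul : ∀ a b : ↥G, ((a * b : ↥G) : X →L[𝕜] X) = a.1.comp b.1 := fun a b => rfl
  have hcmul : Continuous fun p : ↥G × ↥G => p.1 * p.2 := by
    apply Continuous.subtype_mk
    have : Continuous fun p : (X →L[𝕜] X) × (X →L[𝕜] X) => p.1 * p.2 := continuous_mul
    exact this.comp ((continuous_subtype_val.comp continuous_fst).prodMk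
      (continuous_subtype_val.comp continuous_snd))
  letI : ContinuousMul ↥G := ⟨hcmul⟩
  have hcinv : Continuous fun a : ↥G => a⁻¹ := by
    rw [continuous_iff_seqContinuous]
    intro u a hu
    apply Filter.tendsto_of_subseq_tendsto
    intro ns hns
    obtain ⟨b, -, φ, hφ, hbtend⟩ :=
      isCompact_univ.tendsto_subseq (x := fun n => (u (ns n))⁻¹) (fun n => Set.mem_univ _)
    refine ⟨φ, ?_⟩
    have hua : Filter.Tendsto (fun k => u (ns (φ k))) Filter.atTop (nhds a) :=
      hu.comp ((hns.comp hφ.tendsto_atTop))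
    have hmt : Filter.Tendsto (fun k => u (ns (φ k)) * (u (ns (φ k)))⁻¹)
        Filter.atTop (nhds (a * b)) := hua.mul hbtend
    simp only [mul_inv_cancel] at hmt
    have hab : a * b = 1 := tendsto_nhds_unique hmt tendsto_const_nhds
    have hb : b = a⁻¹ := (inv_eq_of_mul_eq_one_right hab).symm
    rw [hb] at hbtend
    exact hbtend
  letI : IsTopologicalGroup ↥G := { continuous_inv := hcinv }
  letI : MeasurableSpace ↥G := borel ↥G
  haveI : BorelSpace ↥G := ⟨rfl⟩
  haveI : LocallyCompactSpace ↥G := inferInstance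
  set μ : Measure ↥G := Measure.haar
  haveI : IsFiniteMeasure μ := inferInstance
  have hμ0 : μ Set.univ ≠ 0 := (isOpen_univ.measure_pos μ ⟨1, Set.mem_univ _⟩).ne'
  have hμt : μ Set.univ ≠ ⊤ := (isCompact_univ.measure_lt_top).ne
  set μ' : Measure ↥G := (μ Set.univ)⁻¹ • μ with hμ'
  haveI : IsProbabilityMeasure μ' := by
    constructor
    rw [hμ', Measure.smul_apply, smul_eq_mul, ENNReal.inv_mul_cancel hμ0 hμt]
  haveI : μ'.IsMulLeftInvariant := inferInstance
  set φ : ↥G → X := fun g => (g : X →L[𝕜] X) y with hφdef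
  have hφcont : Continuous φ := by
    exact ((ContinuousLinearMap.apply 𝕜 X y).continuous).comp continuous_subtype_val
  have hφint : Integrable φ μ' :=
    hφcont.integrable_of_hasCompactSupport
      (IsCompact.of_isClosed_subset isCompact_univ (isClosed_tsupport _) (Set.subset_univ _))
  set y' : X := ∫ g, φ g ∂μ' with hy'def
  -- y' ∈ Y
  have hψ : ∀ g : ↥G, φ g ∈ Y := by
    intro g
    rw [← SetLike.mem_coe, ← hY_inv g.1 g.2]
    exact Set.mem_image_of_mem _ hy
  haveI : CompleteSpace ↥Y := hY_closed.completeSpace_coe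
  letI : NormedSpace ℝ ↥Y := NormedSpace.restrictScalars ℝ 𝕜 ↥Y
  set ψ : ↥G → ↥Y := fun g => ⟨φ g, hψ g⟩ with hψdef
  have hψcont : Continuous ψ := hφcont.subtype_mk _
  have hψint : Integrable ψ μ' :=
    hψcont.integrable_of_hasCompactSupport
      (IsCompact.of_isClosed_subset isCompact_univ (isClosed_tsupport _) (Set.subset_univ _))
  have hy'Y : y' ∈ Y := by
    have h1 : ∫ g, Y.subtypeL (ψ g) ∂μ' = Y.subtypeL (∫ g, ψ g ∂μ') :=
      Y.subtypeL.integral_comp_comm hψint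
    have h2 : ∀ g : ↥G, Y.subtypeL (ψ g) = φ g := fun g => rfl
    simp only [h2] at h1
    rw [hy'def, h1]
    exact Submodule.coe_mem _
  -- invariance
  have hy'fix : ∀ h ∈ G, h y' = y' := by
    intro h hh
    have h1 : (h : X →L[𝕜] X) (∫ g, φ g ∂μ') = ∫ g, h (φ g) ∂μ' :=
      (ContinuousLinearMap.integral_comp_comm h hφint).symm
    have h2 : ∀ g : ↥G, h (φ g) = φ ((⟨h, hh⟩ : ↥G) * g) := fun g => rfl
    rw [hy'def, h1]
    simp only [h2]
    rw [integral_mul_left_eq_self (μ := μ') φ (⟨h, hh⟩ : ↥G)]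
  -- distance
  have hdist : ‖x - y'‖ ≤ ‖x - y‖ := by
    have hxconst : x = ∫ _g, x ∂μ' := by
      rw [integral_const, probReal_univ, one_smul]
    have hsub : x - y' = ∫ g, (x - φ g) ∂μ' := by
      rw [hy'def]
      nth_rewrite 1 [hxconst]
      exact (integral_sub (integrable_const x) hφint).symm
    rw [hsub]
    have hb : ‖∫ g, (x - φ g) ∂μ'‖ ≤ ‖x - y‖ * (μ' Set.univ).toReal := by
      apply norm_integral_le_of_norm_le_const
      filter_upwards with g
      have : x - φ g = (g : X →L[𝕜] X) (x - y) := by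
        rw [map_sub, hx g.1 g.2]
      rw [this, hG_iso g.1 g.2]
    rwa [measure_univ, ENNReal.toReal_one, mul_one] at hb
  exact ⟨y', hy'Y, hy'fix, hdist⟩

end Aux

set_option maxHeartbeats 1000000 in
/-- Let `X` be a Banach space, `G ⊆ L(X)` a compact group of isometries, and
`Y` a closed `G`-invariant subspace of `X`.  If the quotient `X/Y` is strictly convex and every
continuous linear functional on `X_G` vanishing on `Y_G = Y ∩ X_G` attains its norm, then `Y_G`
is proximinal in `X_G`. -/
theorem proximinal_of_quotient_strictConvex
    {𝕜 : Type*} [RCLike 𝕜]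
    {X : Type*} [NormedAddCommGroup X] [NormedSpace 𝕜 X] [CompleteSpace X]
    (G : Set (X →L[𝕜] X))
    -- `G` consists of isometries:
    (hG_iso : ∀ g ∈ G, ∀ x : X, ‖g x‖ = ‖x‖)
    -- `G` is a group under composition:
    (hG_id : ContinuousLinearMap.id 𝕜 X ∈ G)
    (hG_comp : ∀ g ∈ G, ∀ h ∈ G, g.comp h ∈ G)
    (hG_inv : ∀ g ∈ G, ∃ h ∈ G, g.comp h = ContinuousLinearMap.id 𝕜 X ∧
      h.comp g = ContinuousLinearMap.id 𝕜 X)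
    -- `G` is compact in the operator-norm topology:
    (hG_cpt : IsCompact G)
    -- `Y` is a closed `G`-invariant subspace:
    (Y : Submodule 𝕜 X) (hY_closed : IsClosed (Y : Set X))
    (hY_inv : ∀ g ∈ G, (g : X →L[𝕜] X) '' (Y : Set X) = (Y : Set X))
    -- the quotient `X/Y` is strictly convex:
    (hconv : ∀ u v : X ⧸ Y, ‖u‖ = 1 → ‖v‖ = 1 → u ≠ v → ‖u + v‖ < 2)
    -- every functional on `X_G` vanishing on `Y_G` attains its norm:
    (hfun : ∀ f : (fixedSubmodule G) →L[𝕜] 𝕜,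
      (∀ y : fixedSubmodule G, (y : X) ∈ Y → f y = 0) →
      ∃ x : fixedSubmodule G, ‖x‖ = 1 ∧ ‖f x‖ = ‖f‖) :
    -- `Y_G` is proximinal in `X_G`:
    ∀ x ∈ fixedSubmodule G, ∃ y ∈ Y ⊓ fixedSubmodule G,
      ‖x - y‖ = Metric.infDist x ((Y ⊓ fixedSubmodule G : Submodule 𝕜 X) : Set X) := by
  intro x hx
  set F : Submodule 𝕜 X := fixedSubmodule G with hF
  have hmemF : ∀ w : X, w ∈ F ↔ ∀ g ∈ G, g w = w := fun w => Iff.rfl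
  have hFclosed : IsClosed (F : Set X) := by
    have hset : (F : Set X) = ⋂ g ∈ G, {w : X | g w = w} := by
      ext w
      simp only [Set.mem_iInter, Set.mem_setOf_eq, SetLike.mem_coe]
      exact hmemF w
    rw [hset]
    exact isClosed_biInter fun g hg => isClosed_eq g.continuous continuous_id
  set S : Set X := ((Y ⊓ F : Submodule 𝕜 X) : Set X) with hS
  have hSsubY : S ⊆ (Y : Set X) := fun z hz => ((Submodule.mem_inf).mp hz).1
  have hSne : S.Nonempty := ⟨0, Submodule.zero_mem _⟩
  have hYne : (Y : Set X).Nonempty := ⟨0, Submodule.zero_mem _⟩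
  have hSclosed : IsClosed S := by
    have : S = (Y : Set X) ∩ (F : Set X) := by
      ext z
      simp [hS, Submodule.mem_inf]
    rw [this]; exact hY_closed.inter hFclosed
  set d : ℝ := Metric.infDist x S with hd
  have hd0 : 0 ≤ d := Metric.infDist_nonneg
  rcases eq_or_lt_of_le hd0 with hdz | hdpos
  · -- distance zero: x itself is in `S`
    have hxS : x ∈ S := (hSclosed.mem_iff_infDist_zero hSne).mpr hdz.symm
    exact ⟨x, hxS, by simp [← hd, ← hdz]⟩
  -- main case: `d > 0`
  -- Step 1: averaging. For invariant points distance to `Y` equals distance to `Y_G`.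
  have havg : ∀ w : X, w ∈ F → Metric.infDist w (Y : Set X) = Metric.infDist w S := by
    intro w hw
    apply le_antisymm (Metric.infDist_le_infDist_of_subset hSsubY hSne)
    by_contra hlt
    push_neg at hlt
    obtain ⟨yy, hyyY, hyylt⟩ := (Metric.infDist_lt_iff hYne).mp hlt
    obtain ⟨y', hy'Y, hy'fix, hy'close⟩ :=
      exists_fixed_close_aux G hG_iso hG_id hG_comp hG_inv hG_cpt Y hY_closed hY_inv
        w ((hmemF w).mp hw) yy hyyY
    have hy'S : y' ∈ S := Submodule.mem_inf.mpr ⟨hy'Y, (hmemF y').mpr hy'fix⟩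
    have h1 : Metric.infDist w S ≤ dist w y' := Metric.infDist_le_dist_of_mem hy'S
    rw [dist_eq_norm] at h1
    have h2 : dist w yy = ‖w - yy‖ := dist_eq_norm w yy
    linarith [h1.trans hy'close]
  -- Step 2: the quotient norm on `X ⧸ Y` computes distances to `Y`.
  have hnY : ∀ w : X, ‖(Submodule.Quotient.mk w : X ⧸ Y)‖ = Metric.infDist w (Y : Set X) :=
    fun w => QuotientAddGroup.norm_mk w
  -- Step 3: set up the quotient of `X_G` by `Y_G` and a norming functional.
  set W' : Submodule 𝕜 ↥F := Y.comap F.subtype with hW'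
  haveI : IsClosed (W' : Set ↥F) := hY_closed.preimage continuous_subtype_val
  set x' : ↥F := ⟨x, hx⟩ with hx'
  have hcoeW : (Subtype.val '' (W' : Set ↥F) : Set X) = S := by
    ext z
    constructor
    · rintro ⟨w, hwW, rfl⟩
      exact Submodule.mem_inf.mpr ⟨hwW, w.2⟩
    · intro hz
      exact ⟨⟨z, ((Submodule.mem_inf).mp hz).2⟩, ((Submodule.mem_inf).mp hz).1, rfl⟩
  have hnq : ∀ w : ↥F, ‖(Submodule.Quotient.mk w : ↥F ⧸ W')‖ = Metric.infDist (w : X) S := by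
    intro w
    have h1 : ‖(Submodule.Quotient.mk w : ↥F ⧸ W')‖ = Metric.infDist w (W' : Set ↥F) :=
      QuotientAddGroup.norm_mk w
    rw [h1, ← hcoeW]
    exact (Metric.infDist_image isometry_subtype_coe).symm
  have hmkx : ‖(Submodule.Quotient.mk x' : ↥F ⧸ W')‖ = d := hnq x'
  have hmkne : (Submodule.Quotient.mk x' : ↥F ⧸ W') ≠ 0 := by
    intro h
    rw [h, norm_zero] at hmkx
    exact hdpos.ne hmkx
  obtain ⟨g, hg1, hgx⟩ := exists_dual_vector 𝕜 (Submodule.Quotient.mk x' : ↥F ⧸ W') (norm_ne_zero_iff.mpr hmkne)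
  set mkC : ↥F →L[𝕜] (↥F ⧸ W') :=
    LinearMap.mkContinuous W'.mkQ 1 (fun z => by
      rw [one_mul]
      exact Submodule.Quotient.norm_mk_le _ z) with hmkC
  set f : ↥F →L[𝕜] 𝕜 := g.comp mkC with hfdef
  have hfapp : ∀ w : ↥F, f w = g (Submodule.Quotient.mk w) := by
    intro w
    rw [hfdef]
    simp only [ContinuousLinearMap.comp_apply, hmkC, LinearMap.mkContinuous_apply,
      Submodule.mkQ_apply]
  have hfW : ∀ y : ↥F, (y : X) ∈ Y → f y = 0 := by
    intro y hyY
    have hyW : y ∈ W' := Submodule.mem_comap.mpr hyY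
    rw [hfapp, (Submodule.Quotient.mk_eq_zero W').mpr hyW, map_zero]
  have hfle : ∀ w : ↥F, ‖f w‖ ≤ Metric.infDist (w : X) S := by
    intro w
    rw [hfapp]
    calc ‖g (Submodule.Quotient.mk w)‖ ≤ ‖g‖ * ‖(Submodule.Quotient.mk w : ↥F ⧸ W')‖ :=
          g.le_opNorm _
      _ = Metric.infDist (w : X) S := by rw [hg1, one_mul, hnq]
  have hfnorm1 : ‖f‖ ≤ 1 := by
    apply f.opNorm_le_bound zero_le_one
    intro w
    rw [one_mul]
    refine (hfle w).trans ?_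
    have h0 : Metric.infDist (w : X) S ≤ dist (w : X) 0 :=
      Metric.infDist_le_dist_of_mem (Submodule.zero_mem _)
    rwa [dist_zero_right] at h0
  have hfge : 1 ≤ ‖f‖ := by
    have key : ∀ ε : ℝ, 0 < ε → d ≤ ‖f‖ * d + ε := by
      intro ε hε
      obtain ⟨m, hm, hmlt⟩ :=
        Submodule.Quotient.norm_mk_lt (Submodule.Quotient.mk x' : ↥F ⧸ W') hε
      have hfm : f m = g (Submodule.Quotient.mk x') := by rw [hfapp, hm]
      have hfmn : ‖f m‖ = d := by
        rw [hfm, hgx, RCLike.norm_ofReal, abs_of_nonneg (norm_nonneg _), hmkx]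
      have h1 : ‖f m‖ ≤ ‖f‖ * ‖m‖ := f.le_opNorm m
      rw [hmkx] at hmlt
      nlinarith [norm_nonneg f, norm_nonneg m]
    have h2 : d ≤ ‖f‖ * d := le_of_forall_pos_le_add key
    nlinarith
  have hfnorm : ‖f‖ = 1 := le_antisymm hfnorm1 hfge
  -- Step 4: apply the norm-attainment hypothesis.
  obtain ⟨z, hz1, hzf⟩ := hfun f hfW
  rw [hfnorm] at hzf
  set c : 𝕜 := (starRingEnd 𝕜) (f z) with hc
  set z' : ↥F := c • z with hz'
  have hfz' : f z' = 1 := by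
    rw [hz', map_smul, smul_eq_mul, hc, RCLike.conj_mul, hzf]
    norm_num
  have hz'1 : ‖z'‖ = 1 := by
    rw [hz', norm_smul, hc, RCLike.norm_conj, hzf, hz1, one_mul]
  set ζ : X := (z' : X) with hζ
  have hζF : ζ ∈ F := z'.2
  have hζd : Metric.infDist ζ S = 1 := by
    apply le_antisymm
    · have h0 : Metric.infDist ζ S ≤ dist ζ 0 :=
        Metric.infDist_le_dist_of_mem (Submodule.zero_mem _)
      rwa [dist_zero_right, (show ‖ζ‖ = 1 from hz'1)] at h0
    · have := hfle z'
      rwa [hfz', norm_one] at this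
  -- Step 5: strict convexity of `X ⧸ Y` forces the nearest point.
  set e : 𝕜 := (d : 𝕜) with he'
  have he : ‖e‖ = d := by rw [he', RCLike.norm_ofReal, abs_of_pos hdpos]
  have hene : e ≠ 0 := by
    rw [he']
    exact_mod_cast hdpos.ne'
  set u : X ⧸ Y := Submodule.Quotient.mk (e⁻¹ • x) with hu
  set v : X ⧸ Y := Submodule.Quotient.mk ζ with hv
  have hxYd : Metric.infDist x (Y : Set X) = d := havg x hx
  have hu1 : ‖u‖ = 1 := by
    rw [hu, Submodule.Quotient.mk_smul, norm_smul, norm_inv, he, hnY, hxYd,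
      inv_mul_cancel₀ hdpos.ne']
  have hv1 : ‖v‖ = 1 := by rw [hv, hnY, havg ζ hζF, hζd]
  have hfx : f x' = e := by rw [hfapp, hgx, hmkx]
  have huv : ‖u + v‖ = 2 := by
    apply le_antisymm
    · calc ‖u + v‖ ≤ ‖u‖ + ‖v‖ := norm_add_le u v
        _ = 2 := by rw [hu1, hv1]; norm_num
    · have hsum : u + v = Submodule.Quotient.mk (e⁻¹ • x + ζ) := by
        rw [hu, hv, ← Submodule.Quotient.mk_add]
      set w : X := e⁻¹ • x + ζ with hw
      have hwF : w ∈ F := F.add_mem (F.smul_mem _ hx) hζF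
      set w' : ↥F := ⟨w, hwF⟩ with hw'
      have hw'eq : w' = e⁻¹ • x' + z' := by
        apply Subtype.ext
        rfl
      have hfw : f w' = 2 := by
        rw [hw'eq, map_add, map_smul, hfx, hfz', smul_eq_mul, inv_mul_cancel₀ hene]
        norm_num
      have h2 : (2:ℝ) ≤ Metric.infDist w S := by
        have := hfle w'
        rw [hfw] at this
        calc (2:ℝ) = ‖(2:𝕜)‖ := by simp
          _ ≤ Metric.infDist w S := this
      rw [hsum, hnY, havg w hwF]
      exact h2
  have huveq : u = v := by
    by_contra hne
    have := hconv u v hu1 hv1 hne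
    rw [huv] at this
    exact lt_irrefl 2 this
  have hmem2 : e⁻¹ • x - ζ ∈ Y := (Submodule.Quotient.eq Y).mp huveq
  set y : X := x - e • ζ with hy
  have hyY : y ∈ Y := by
    have heq : y = e • (e⁻¹ • x - ζ) := by
      rw [hy, smul_sub, smul_smul, mul_inv_cancel₀ hene, one_smul]
    rw [heq]
    exact Y.smul_mem _ hmem2
  have hyF : y ∈ F := F.sub_mem hx (F.smul_mem _ hζF)
  refine ⟨y, Submodule.mem_inf.mpr ⟨hyY, hyF⟩, ?_⟩
  have hxy : x - y = e • ζ := by rw [hy, sub_sub_cancel]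
  rw [hxy, norm_smul, he, (show ‖ζ‖ = 1 from hz'1), mul_one]

end
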